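/- Let G be a group, H ≤ G a subgroup, F ⊆ H a finite subset, A a finite alphabet and L ⊆ A^F, and suppose the SFT Y ⊆ A^H defined by (F, L) on H is nonempty and satisfies: for every g ∈ G with g ≠ 1 there exist t ∈ G and an integer n > 0 with (t g t⁻¹)^n ∈ Free(Y). Then the SFT X ⊆ A^G defined by (F, L) on G is nonempty and strongly aperiodic. -/

import Mathlib

variable {G A : Type*}

/-- The left shift action of a group on configurations: `(shift g x) h = x (g⁻¹ * h)`. -/
def shift [Group G] (g : G) (x : G → A) : G → A := fun h => x (g⁻¹ * h)

/-- The subshift of finite type on `G` defined by the shape `F` and the pattern set `L`: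
all configurations `x` such that for every `g`, the restriction of `g • x` to `F` lies in `L`. -/
def SFT [Group G] (F : Set G) (L : Set (F → A)) : Set (G → A) :=
  {x | ∀ g : G, (fun f : F => shift g x f) ∈ L}

/-- The subshift of finite type on the subgroup `H` defined by the shape `F ⊆ H`
and the pattern set `L`. -/
def SFTon [Group G] (H : Subgroup G) (F : Set G) (hF : F ⊆ (H : Set G)) (L : Set (F → A)) :
    Set (↥H → A) :=
  {y | ∀ h : ↥H, (fun f : F => y (h⁻¹ * ⟨(f : G), hF f.2⟩)) ∈ L}

/-- The free part of a subshift: elements acting freely on every configuration. -/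
def freePart [Group G] (X : Set (G → A)) : Set G := {g | ∀ x ∈ X, shift g x ≠ x}

lemma shift_mul [Group G] (a b : G) (x : G → A) :
    shift (a * b) x = shift a (shift b x) := by
  funext h; simp [shift, mul_assoc]

lemma shift_pow [Group G] (c : G) (x : G → A) (hc : shift c x = x) (n : ℕ) :
    shift (c ^ n) x = x := by
  induction n with
  | zero => funext h; simp [shift]
  | succ n ih => rw [pow_succ, shift_mul, hc, ih]

/-- If the SFT `Y` defined by `(F, L)` on `H ≤ G` is nonempty and every
nontrivial `g ∈ G` has a conjugate with a positive power in `Free(Y)`, then the SFT `X`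
defined by `(F, L)` on `G` is nonempty and strongly aperiodic. -/
theorem SA_of_cond
    {G A : Type*} [Group G] [Finite A] (H : Subgroup G) (F : Set G) (hFfin : F.Finite)
    (hF : F ⊆ (H : Set G)) (L : Set (F → A))
    (hYne : (SFTon H F hF L).Nonempty)
    (hcond : ∀ g : G, g ≠ 1 → ∃ t : G, ∃ n : ℕ, 0 < n ∧
      ∃ k : ↥H, (k : G) = (t * g * t⁻¹) ^ n ∧ k ∈ freePart (SFTon H F hF L)) :
    (SFT F L).Nonempty ∧ ∀ x ∈ SFT F L, ∀ g : G, shift g x = x → g = 1 := by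
  classical
  constructor
  · -- Nonemptiness: copy `y` onto each left coset of `H`.
    obtain ⟨y, hy⟩ := hYne
    have hrep : ∀ g : G, (Quotient.out (QuotientGroup.mk (s := H) g))⁻¹ * g ∈ H := by
      intro g
      have : (QuotientGroup.mk (s := H) (Quotient.out (QuotientGroup.mk (s := H) g)))
          = QuotientGroup.mk (s := H) g := Quotient.out_eq _
      exact (QuotientGroup.eq (s := H)).mp this
    refine ⟨fun g => y ⟨_, hrep g⟩, ?_⟩
    intro g
    have hmk : ∀ f : F, QuotientGroup.mk (s := H) (g⁻¹ * (f : G))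
        = QuotientGroup.mk (s := H) g⁻¹ := by
      intro f
      exact QuotientGroup.mk_mul_of_mem g⁻¹ (hF f.2)
    set r : G := Quotient.out (QuotientGroup.mk (s := H) g⁻¹) with hr
    have hmemr : r⁻¹ * g⁻¹ ∈ H := hrep g⁻¹
    set h0 : ↥H := ⟨r⁻¹ * g⁻¹, hmemr⟩ with hh0
    have key : (fun f : F => shift g (fun g' => y ⟨_, hrep g'⟩) f)
        = (fun f : F => y ((h0⁻¹)⁻¹ * ⟨(f : G), hF f.2⟩)) := by
      funext f
      show y ⟨(Quotient.out (QuotientGroup.mk (s := H) (g⁻¹ * (f : G))))⁻¹ * (g⁻¹ * (f : G)),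
        hrep _⟩ = _
      congr 1
      apply Subtype.ext
      show (Quotient.out (QuotientGroup.mk (s := H) (g⁻¹ * (f : G))))⁻¹ * (g⁻¹ * (f : G))
        = ((((h0⁻¹)⁻¹ * ⟨(f : G), hF f.2⟩ : ↥H)) : G)
      rw [hmk f]
      simp [hh0, mul_assoc]
      exact hr.symm
    rw [key]
    exact hy h0⁻¹
  · -- Strong aperiodicity
    intro x hx g hfix
    by_contra hg
    obtain ⟨t, n, hn, k, hk, hkfree⟩ := hcond g hg
    set x' : G → A := shift t x with hx'def
    have hx' : x' ∈ SFT F L := by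
      intro g'
      have : (fun f : F => shift g' x' f) = (fun f : F => shift (g' * t) x f) := by
        funext f; rw [shift_mul]
      rw [this]; exact hx (g' * t)
    have hfix1 : shift (t * g * t⁻¹) x' = x' := by
      rw [hx'def, ← shift_mul]
      have : t * g * t⁻¹ * t = t * g := by group
      rw [this, shift_mul, hfix]
    have hfixk : shift ((k : G)) x' = x' := by
      rw [hk]; exact shift_pow _ _ hfix1 n
    set y' : ↥H → A := fun h => x' (h : G) with hy'def
    have hy' : y' ∈ SFTon H F hF L := by
      intro h
      have : (fun f : F => y' (h⁻¹ * ⟨(f : G), hF f.2⟩))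
          = (fun f : F => shift ((h : G)) x' f) := by
        funext f
        show x' (((h⁻¹ * ⟨(f : G), hF f.2⟩ : ↥H) : G)) = x' ((h : G)⁻¹ * (f : G))
        norm_num
      rw [this]; exact hx' (h : G)
    have : shift k y' = y' := by
      funext h
      show x' (((k⁻¹ * h : ↥H) : G)) = x' (h : G)
      have : ((k⁻¹ * h : ↥H) : G) = (k : G)⁻¹ * (h : G) := by norm_num
      rw [this]
      exact congrFun hfixk (h : G)
    exact hkfree y' hy' this
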